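/- Let α ∈ (0,π) and let a, c ∈ ℝ² be distinct points. Suppose b₁ and b₂ are distinct points, neither lying on the line through a and c, lying strictly on the same side of that line, with ∠(a,b₁,c) = α and ∠(a,b₂,c) = α. Then the images of the two α-bend edges (a,b₁,c) and (a,b₂,c) intersect in a point different from a and from c (i.e., the two one-bend polylines cross). Consequently, a plane α-bend multigraph contains at most one edge between a and c whose bend point lies in a given open halfplane bounded by the line through a and c. -/

import Mathlib

open EuclideanGeometry Real Set

noncomputable section

/-- The Euclidean plane. -/
abbrev Pt : Type := EuclideanSpace ℝ (Fin 2)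

/-- The image of a one-bend edge `(a,b,c)`: the union of segments `[a,b]` and `[b,c]`. -/
def bendImage (e : Pt × Pt × Pt) : Set Pt :=
  segment ℝ e.1 e.2.1 ∪ segment ℝ e.2.1 e.2.2

/-- The endpoints of a (bend or arc) edge `(a,b,c)` are `a` and `c`. -/
def edgeEndpoints (e : Pt × Pt × Pt) : Set Pt := {e.1, e.2.2}

/-- An `α`-bend edge: a triple `(a,b,c)` with `a ≠ c` and angle `α` at `b`. -/
def IsBendEdge (α : ℝ) (e : Pt × Pt × Pt) : Prop :=
  e.1 ≠ e.2.2 ∧ ∠ e.1 e.2.1 e.2.2 = α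

/-- A plane `α`-bend multigraph on a finite vertex set `V`. -/
def IsPlaneBendMultigraph (α : ℝ) (V : Finset Pt) (E : Finset (Pt × Pt × Pt)) : Prop :=
  (∀ e ∈ E, IsBendEdge α e ∧ e.1 ∈ V ∧ e.2.2 ∈ V) ∧
  (∀ e ∈ E, ∀ f ∈ E, e ≠ f → bendImage e ≠ bendImage f) ∧
  (∀ e ∈ E, ∀ v ∈ V, (v : Pt) ∈ bendImage e → (v : Pt) ∈ edgeEndpoints e) ∧
  (∀ e ∈ E, ∀ f ∈ E, e ≠ f →
    bendImage e ∩ bendImage f ⊆ edgeEndpoints e ∩ edgeEndpoints f)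

/-- A plane `α`-bend graph: a plane `α`-bend multigraph in which distinct edges
have distinct endpoint pairs. -/
def IsPlaneBendGraph (α : ℝ) (V : Finset Pt) (E : Finset (Pt × Pt × Pt)) : Prop :=
  IsPlaneBendMultigraph α V E ∧
  ∀ e ∈ E, ∀ f ∈ E, e ≠ f → edgeEndpoints e ≠ edgeEndpoints f

/-- An `α`-arc edge: a triple `(a,b,c)` with `a ≠ c`, `b` off of the line `ac`,
and angle `α` at `b`. -/
def IsArcEdge (α : ℝ) (e : Pt × Pt × Pt) : Prop :=
  e.1 ≠ e.2.2 ∧ e.2.1 ∉ affineSpan ℝ ({e.1, e.2.2} : Set Pt) ∧ ∠ e.1 e.2.1 e.2.2 = α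

/-- The image of an arc edge `(a,b,c)`: `{a,c}` together with the points strictly on the
same side of line `ac` as `b` from which the segment `ac` subtends the same angle as at `b`. -/
def arcImage (e : Pt × Pt × Pt) : Set Pt :=
  ({e.1, e.2.2} : Set Pt) ∪
    {x : Pt | (affineSpan ℝ ({e.1, e.2.2} : Set Pt)).SSameSide x e.2.1 ∧
      ∠ e.1 x e.2.2 = ∠ e.1 e.2.1 e.2.2}

/-- A plane `α`-arc multigraph on a finite vertex set `V`. -/
def IsPlaneArcMultigraph (α : ℝ) (V : Finset Pt) (E : Finset (Pt × Pt × Pt)) : Prop :=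
  (∀ e ∈ E, IsArcEdge α e ∧ e.1 ∈ V ∧ e.2.2 ∈ V) ∧
  (∀ e ∈ E, ∀ f ∈ E, e ≠ f → arcImage e ≠ arcImage f) ∧
  (∀ e ∈ E, ∀ v ∈ V, (v : Pt) ∈ arcImage e → (v : Pt) ∈ edgeEndpoints e) ∧
  (∀ e ∈ E, ∀ f ∈ E, e ≠ f →
    arcImage e ∩ arcImage f ⊆ edgeEndpoints e ∩ edgeEndpoints f)

/-- A plane `α`-arc graph: a plane `α`-arc multigraph in which distinct edges
have distinct endpoint pairs. -/
def IsPlaneArcGraph (α : ℝ) (V : Finset Pt) (E : Finset (Pt × Pt × Pt)) : Prop :=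
  IsPlaneArcMultigraph α V E ∧
  ∀ e ∈ E, ∀ f ∈ E, e ≠ f → edgeEndpoints e ≠ edgeEndpoints f

/-- A finite point set is in general position if no three of its points are collinear. -/
def GenPos (P : Finset Pt) : Prop :=
  ∀ p ∈ P, ∀ q ∈ P, ∀ r ∈ P, p ≠ q → p ≠ r → q ≠ r →
    ¬ Collinear ℝ ({p, q, r} : Set Pt)

/-- A planar straight-line graph on `P`: edges are (ordered representatives of unordered)
pairs of distinct points of `P` whose closed segments pairwise intersect only in shared
endpoints, and no segment contains a point of `P` other than its endpoints. -/
def IsPSLG (P : Finset Pt) (E : Finset (Pt × Pt)) : Prop :=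
  (∀ e ∈ E, e.1 ∈ P ∧ e.2 ∈ P ∧ e.1 ≠ e.2) ∧
  (∀ e ∈ E, ∀ f ∈ E, e ≠ f → segment ℝ e.1 e.2 ≠ segment ℝ f.1 f.2) ∧
  (∀ e ∈ E, ∀ p ∈ P, (p : Pt) ∈ segment ℝ e.1 e.2 → p = e.1 ∨ p = e.2) ∧
  (∀ e ∈ E, ∀ f ∈ E, e ≠ f →
    segment ℝ e.1 e.2 ∩ segment ℝ f.1 f.2 ⊆ ({e.1, e.2} : Set Pt) ∩ ({f.1, f.2} : Set Pt))

/-- `M P`: the maximum number of edges of a planar straight-line graph on `P`. -/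
def M (P : Finset Pt) : ℕ :=
  sSup {m : ℕ | ∃ E : Finset (Pt × Pt), IsPSLG P E ∧ E.card = m}

/-- Two segments (given by their endpoint pairs) cross: they meet in exactly one point,
which lies in the relative interior (open segment) of both. -/
def SegCross (s t : Pt × Pt) : Prop :=
  ∃ x : Pt, segment ℝ s.1 s.2 ∩ segment ℝ t.1 t.2 = {x} ∧
    x ∈ openSegment ℝ s.1 s.2 ∧ x ∈ openSegment ℝ t.1 t.2

lemma indep_of_not_mem_span {a c b : Pt} (hac : a ≠ c)
    (hb : b ∉ affineSpan ℝ ({a, c} : Set Pt)) :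
    LinearIndependent ℝ ![b - a, c - a] := by
  rw [linearIndependent_fin2]
  refine ⟨by simpa [sub_eq_zero] using (Ne.symm hac), ?_⟩
  intro r hr
  simp only [Matrix.cons_val_one, Matrix.head_cons, Matrix.cons_val_zero] at hr
  apply hb
  have ha : a ∈ affineSpan ℝ ({a, c} : Set Pt) := mem_affineSpan ℝ (by simp)
  rw [← AffineSubspace.vsub_right_mem_direction_iff_mem ha, direction_affineSpan,
    vectorSpan_pair]
  refine Submodule.mem_span_singleton.mpr ⟨-r, ?_⟩
  rw [vsub_eq_sub, vsub_eq_sub, ← hr]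
  module

lemma combo_eq_zero {a b c : Pt} (h : LinearIndependent ℝ ![b - a, c - a])
    {p q r : ℝ} (hs : p + q + r = 0) (hz : p • a + q • b + r • c = 0) :
    p = 0 ∧ q = 0 ∧ r = 0 := by
  have hp : p = -q - r := by linarith
  have h2 : q • (b - a) + r • (c - a) = 0 := by
    rw [hp] at hz; linear_combination (norm := module) hz
  have h3 := Fintype.linearIndependent_iff.mp h ![q, r]
    (by simpa [Fin.sum_univ_two] using h2)
  have hq := h3 0
  have hr := h3 1
  simp only [Matrix.cons_val_zero, Matrix.cons_val_one, Matrix.head_cons] at hq hr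
  exact ⟨by linarith, hq, hr⟩

set_option maxHeartbeats 1000000 in
lemma angle_lt_of_interior {a b c x : Pt}
    (h : LinearIndependent ℝ ![b - a, c - a])
    {u v w : ℝ} (hu : 0 < u) (hv : 0 < v) (hw : 0 < w) (hsum : u + v + w = 1)
    (hx : x = u • a + v • b + w • c) : ∠ a b c < ∠ a x c := by
  subst hx
  set x : Pt := u • a + v • b + w • c with hxdef
  have key : ∀ p q r : ℝ, p + q + r = 0 → p • a + q • b + r • c = 0 →
      p = 0 ∧ q = 0 ∧ r = 0 := fun p q r h1 h2 => combo_eq_zero h h1 h2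
  obtain ⟨s, hs⟩ : ∃ s : ℝ, s = v + w := ⟨v + w, rfl⟩
  have hs0 : 0 < s := by rw [hs]; positivity
  have hs1 : s < 1 := by rw [hs]; linarith
  have hsne : s ≠ 0 := ne_of_gt hs0
  have hone : v/s + w/s = 1 := by rw [hs]; field_simp
  have hus : 1 - s = u := by rw [hs]; linarith
  obtain ⟨d, hd⟩ : ∃ d : Pt, d = (v/s) • b + (w/s) • c := ⟨_, rfl⟩
  -- distinctness facts
  have hxa : x ≠ a := by
    intro hh
    have := (key (u-1) v w (by linarith) (by linear_combination (norm := module) hh)).2.1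
    linarith
  have hdx : x ≠ d := by
    intro hh
    rw [hd] at hh
    have := (key u (v - v/s) (w - w/s) (by linear_combination hsum - hone)
      (by linear_combination (norm := module) hh)).1
    linarith
  have hcx : c ≠ x := by
    intro hh
    have := (key u v (w-1) (by linarith) (by linear_combination (norm := module) hh.symm)).2.1
    linarith
  have hda : a ≠ d := by
    intro hh
    rw [hd] at hh
    have h0 := (key (-1) (v/s) (w/s) (by linear_combination hone)
      (by linear_combination (norm := module) hh.symm)).2.1
    have : v = 0 := by field_simp at h0; linarith
    linarith
  have hdb : d ≠ b := by
    intro hh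
    rw [hd] at hh
    have h0 := (key 0 (v/s - 1) (w/s) (by linear_combination hone)
      (by linear_combination (norm := module) hh)).2.2
    have : w = 0 := by field_simp at h0; linarith
    linarith
  have hdc : d ≠ c := by
    intro hh
    rw [hd] at hh
    have h0 := (key 0 (v/s) (w/s - 1) (by linear_combination hone)
      (by linear_combination (norm := module) hh)).2.1
    have : v = 0 := by field_simp at h0; linarith
    linarith
  -- x strictly between a and d
  have heq1 : (1 - s) • a + s • d = x := by
    rw [hd]
    match_scalars
    · linarith
    · field_simp
    · field_simp
  have hsbtw1 : Sbtw ℝ a x d :=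
    ⟨mem_segment_iff_wbtw.mp ⟨1 - s, s, by linarith, le_of_lt hs0, by ring, heq1⟩,
      hxa, hdx⟩
  have h1 : ∠ a x d = π := angle_eq_pi_iff_sbtw.mpr hsbtw1
  have h2 : ∠ c x a + ∠ c x d = π := angle_add_angle_eq_pi_of_angle_eq_pi c h1
  have htri1 : ∠ x d c + ∠ d c x + ∠ c x d = π :=
    angle_add_angle_add_angle_eq_pi c (Ne.symm hdx)
  -- positivity of ∠ d c x
  have hdcx : ∠ d c x ≠ 0 := by
    intro hh
    rw [EuclideanGeometry.angle, InnerProductGeometry.angle_eq_zero_iff] at hh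
    obtain ⟨-, r, hr, hreq⟩ := hh
    simp only [vsub_eq_sub] at hreq
    rw [hd] at hreq
    have := (key u (v - r*(v/s)) (w - 1 - r*(w/s - 1))
      (by linear_combination hsum - r * hone)
      (by linear_combination (norm := module) hreq)).1
    linarith
  -- ∠ x d c = ∠ a d c
  have hxdc : ∠ x d c = ∠ a d c := by
    have hvec : x - d = (1 - s) • (a - d) := by
      rw [← heq1]; module
    show InnerProductGeometry.angle (x -ᵥ d) (c -ᵥ d) =
      InnerProductGeometry.angle (a -ᵥ d) (c -ᵥ d)
    simp only [vsub_eq_sub]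
    rw [hvec, InnerProductGeometry.angle_smul_left_of_pos _ _ (by linarith)]
  -- d strictly between b and c
  have hsbtw2 : Sbtw ℝ b d c :=
    ⟨mem_segment_iff_wbtw.mp ⟨v/s, w/s, by positivity, by positivity, hone, hd.symm⟩,
      hdb, hdc⟩
  have h1' : ∠ b d c = π := angle_eq_pi_iff_sbtw.mpr hsbtw2
  have h2' : ∠ a d b + ∠ a d c = π := angle_add_angle_eq_pi_of_angle_eq_pi a h1'
  have htri2 : ∠ d a b + ∠ a b d + ∠ b d a = π :=
    angle_add_angle_add_angle_eq_pi b hda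
  have hdab : ∠ d a b ≠ 0 := by
    intro hh
    rw [EuclideanGeometry.angle, InnerProductGeometry.angle_eq_zero_iff] at hh
    obtain ⟨-, r, hr, hreq⟩ := hh
    simp only [vsub_eq_sub] at hreq
    rw [hd] at hreq
    have h0 := (key (r - 1) (1 - r*(v/s)) (-(r*(w/s)))
      (by linear_combination (-r) * hone)
      (by linear_combination (norm := module) hreq)).2.2
    have : 0 < r * (w/s) := mul_pos hr (div_pos hw hs0)
    linarith
  -- ∠ a b d = ∠ a b c
  have habd : ∠ a b d = ∠ a b c := by
    have hvec : d - b = (w/s) • (c - b) := by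
      rw [hd]
      match_scalars
      · linear_combination hone
      · ring
    show InnerProductGeometry.angle (a -ᵥ b) (d -ᵥ b) =
      InnerProductGeometry.angle (a -ᵥ b) (c -ᵥ b)
    simp only [vsub_eq_sub]
    rw [hvec, InnerProductGeometry.angle_smul_right_of_pos _ _ (by positivity)]
  have hcomm : ∠ a x c = ∠ c x a := angle_comm a x c
  have hcomm2 : ∠ b d a = ∠ a d b := angle_comm b d a
  have hdcx' : 0 < ∠ d c x := lt_of_le_of_ne (angle_nonneg d c x) (Ne.symm hdcx)
  have hdab' : 0 < ∠ d a b := lt_of_le_of_ne (angle_nonneg d a b) (Ne.symm hdab)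
  linarith [hxdc, habd]

lemma coeff_pos_of_sSameSide {a c b₁ b₂ : Pt} (hac : a ≠ c)
    (hside : (affineSpan ℝ ({a, c} : Set Pt)).SSameSide b₁ b₂)
    {u v w : ℝ} (hsum : u + v + w = 1) (hx : b₂ = u • a + v • b₁ + w • c) : 0 < v := by
  obtain ⟨⟨p₁, hp₁, p₂, hp₂, hray⟩, hb₁s, hb₂s⟩ := hside
  have hli := indep_of_not_mem_span hac hb₁s
  have hsp : ⊤ ≤ Submodule.span ℝ (Set.range ![b₁ - a, c - a]) := by
    rw [hli.span_eq_top_of_card_eq_finrank (by simp)]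
  let bs : Module.Basis (Fin 2) ℝ Pt := Module.Basis.mk hli hsp
  let F : Pt →ₗ[ℝ] ℝ := bs.coord 0
  have hFb : F (b₁ - a) = 1 := by
    have h0 : bs 0 = b₁ - a := by simp [bs, Module.Basis.mk_apply]
    rw [← h0]
    simp [F, Module.Basis.coord_apply]
  have hFc : F (c - a) = 0 := by
    have h0 : bs 1 = c - a := by simp [bs, Module.Basis.mk_apply]
    rw [← h0]
    simp [F, Module.Basis.coord_apply]
  have ha : a ∈ affineSpan ℝ ({a, c} : Set Pt) := mem_affineSpan ℝ (by simp)
  have hmemF : ∀ p, p ∈ affineSpan ℝ ({a, c} : Set Pt) → F (p - a) = 0 := by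
    intro p hp
    have hdir : p -ᵥ a ∈ (affineSpan ℝ ({a, c} : Set Pt)).direction :=
      (AffineSubspace.vsub_right_mem_direction_iff_mem ha p).mpr hp
    rw [direction_affineSpan, vectorSpan_pair] at hdir
    obtain ⟨t, ht⟩ := Submodule.mem_span_singleton.mp hdir
    have hpa : p - a = (-t) • (c - a) := by
      simp only [vsub_eq_sub] at ht
      linear_combination (norm := module) -ht
    rw [hpa, map_smul, hFc, smul_zero]
  have hne1 : b₁ -ᵥ p₁ ≠ 0 := fun hh => hb₁s (by rwa [vsub_eq_zero_iff_eq.mp hh])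
  have hne2 : b₂ -ᵥ p₂ ≠ 0 := fun hh => hb₂s (by rwa [vsub_eq_zero_iff_eq.mp hh])
  obtain ⟨r, hr, hreq⟩ := hray.exists_pos_left hne1 hne2
  have e1 : F (b₁ -ᵥ p₁) = 1 := by
    rw [vsub_eq_sub, show b₁ - p₁ = (b₁ - a) - (p₁ - a) by abel, map_sub, hFb,
      hmemF p₁ hp₁, sub_zero]
  have e2 : F (b₂ -ᵥ p₂) = v := by
    have hb2a : b₂ - a = v • (b₁ - a) + w • (c - a) := by
      have hu : u = 1 - v - w := by linarith
      rw [hx, hu]; module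
    rw [vsub_eq_sub, show b₂ - p₂ = (b₂ - a) - (p₂ - a) by abel, map_sub,
      hmemF p₂ hp₂, sub_zero, hb2a, map_add, map_smul, map_smul, hFb, hFc]
    simp
  rw [← hreq, map_smul, e1, smul_eq_mul, mul_one] at e2
  rw [← e2]
  exact hr

lemma cross_exists (α : ℝ) (a c : Pt) (hac : a ≠ c) (b₁ b₂ : Pt)
    (hb₁ : b₁ ∉ affineSpan ℝ ({a, c} : Set Pt))
    (hb₂ : b₂ ∉ affineSpan ℝ ({a, c} : Set Pt))
    (hside : (affineSpan ℝ ({a, c} : Set Pt)).SSameSide b₁ b₂)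
    (h₁ : ∠ a b₁ c = α) (h₂ : ∠ a b₂ c = α) :
    ∃ x : Pt, x ∈ bendImage (a, b₁, c) ∩ bendImage (a, b₂, c) ∧ x ≠ a ∧ x ≠ c := by
  have hli := indep_of_not_mem_span hac hb₁
  have hli2 := indep_of_not_mem_span hac hb₂
  have key : ∀ p q r : ℝ, p + q + r = 0 → p • a + q • b₁ + r • c = 0 →
      p = 0 ∧ q = 0 ∧ r = 0 := fun p q r hh1 hh2 => combo_eq_zero hli hh1 hh2
  have hsp : Submodule.span ℝ (Set.range ![b₁ - a, c - a]) = ⊤ :=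
    hli.span_eq_top_of_card_eq_finrank (by simp)
  obtain ⟨p, q, hpq⟩ : ∃ p q : ℝ, p • (b₁ - a) + q • (c - a) = b₂ - a := by
    refine Submodule.mem_span_pair.mp ?_
    have : (Set.range ![b₁ - a, c - a]) = ({b₁ - a, c - a} : Set Pt) := by
      simp only [Matrix.range_cons, Matrix.range_empty, Set.union_empty]
      rfl
    rw [← this, hsp]
    trivial
  obtain ⟨u, hu⟩ : ∃ u : ℝ, u = 1 - p - q := ⟨_, rfl⟩
  have hsum : u + p + q = 1 := by rw [hu]; ring
  have hx : b₂ = u • a + p • b₁ + q • c := by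
    rw [hu]; linear_combination (norm := module) -hpq
  have hv : 0 < p := coeff_pos_of_sSameSide hac hside hsum hx
  have hmema : a ∈ affineSpan ℝ ({a, c} : Set Pt) := mem_affineSpan ℝ (by simp)
  have hmemc : c ∈ affineSpan ℝ ({a, c} : Set Pt) := mem_affineSpan ℝ (by simp)
  have hb2a : b₂ ≠ a := fun h => hb₂ (h ▸ hmema)
  have hb2c : b₂ ≠ c := fun h => hb₂ (h ▸ hmemc)
  have hb1a : b₁ ≠ a := fun h => hb₁ (h ▸ hmema)
  have hb1c : b₁ ≠ c := fun h => hb₁ (h ▸ hmemc)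
  simp only [bendImage]
  rcases le_or_gt u 0 with hu0 | hu0
  · rcases le_or_gt 0 q with hq0 | hq0
    · -- u ≤ 0 ≤ q : crossing on [b₁,c] ∩ [a,b₂]
      obtain ⟨s, hs⟩ : ∃ s : ℝ, s = 1/(1-u) := ⟨_, rfl⟩
      have h1u : (0:ℝ) < 1 - u := by linarith
      have hs0 : 0 < s := by rw [hs]; positivity
      have hs1 : s ≤ 1 := by rw [hs]; rw [div_le_one h1u]; linarith
      refine ⟨(s*p) • b₁ + (s*q) • c, ⟨Or.inr ?_, Or.inl ?_⟩, ?_, ?_⟩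
      · exact ⟨s*p, s*q, by positivity, by positivity,
          by rw [hs]; field_simp; linarith, rfl⟩
      · refine ⟨1-s, s, by linarith, le_of_lt hs0, by ring, ?_⟩
        rw [hx, hs]
        match_scalars
        · field_simp; ring
        · field_simp
        · field_simp
      · intro hh
        have := (key (-1) (s*p) (s*q)
          (by rw [hs]; field_simp; linarith)
          (by linear_combination (norm := module) hh)).2.1
        nlinarith
      · intro hh
        have := (key 0 (s*p) (s*q - 1)
          (by rw [hs]; field_simp; linarith)
          (by linear_combination (norm := module) hh)).2.1
        nlinarith
    · rcases eq_or_lt_of_le hu0 with hu0' | hu0'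
      · -- u = 0, q < 0 : b₁ ∈ [b₂, c]
        refine ⟨b₁, ⟨Or.inl (right_mem_segment ℝ a b₁), Or.inr ?_⟩, hb1a, hb1c⟩
        have hnq : 0 < -q := by linarith
        refine ⟨1/p, -q/p, by positivity, by positivity, ?_, ?_⟩
        · rw [← add_div, div_eq_one_iff_eq (ne_of_gt hv)]; linarith
        · rw [hx, hu0']
          match_scalars
          · field_simp; ring
          · field_simp
          · field_simp; ring
      · -- u < 0, q < 0 : b₁ interior to triangle a b₂ c
        exfalso
        have hx2 : b₁ = (-u/p) • a + (1/p) • b₂ + (-q/p) • c := by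
          rw [hx]
          match_scalars
          · field_simp
          · field_simp; ring
          · field_simp; ring
        have hnu : 0 < -u := by linarith
        have hnq : 0 < -q := by linarith
        have hsum2 : -u/p + 1/p + -q/p = 1 := by
          rw [← add_div, ← add_div, div_eq_one_iff_eq (ne_of_gt hv)]
          linarith
        have := angle_lt_of_interior hli2 (u := -u/p) (v := 1/p) (w := -q/p)
          (by positivity) (by positivity) (by positivity) hsum2 hx2
        rw [h₁, h₂] at this
        exact lt_irrefl α this
  · rcases lt_trichotomy q 0 with hq0 | hq0 | hq0
    · -- u > 0, q < 0 : crossing on [a,b₁] ∩ [b₂,c]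
      obtain ⟨t, ht⟩ : ∃ t : ℝ, t = 1/(1-q) := ⟨_, rfl⟩
      have h1q : (0:ℝ) < 1 - q := by linarith
      have ht0 : 0 < t := by rw [ht]; positivity
      have ht1 : t ≤ 1 := by rw [ht]; rw [div_le_one h1q]; linarith
      refine ⟨(t*u) • a + (t*p) • b₁, ⟨Or.inl ?_, Or.inr ?_⟩, ?_, ?_⟩
      · exact ⟨t*u, t*p, by positivity, by positivity,
          by rw [ht]; field_simp; linarith, rfl⟩
      · refine ⟨t, 1-t, le_of_lt ht0, by linarith, by ring, ?_⟩
        rw [hx, ht]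
        match_scalars
        · field_simp
        · field_simp
        · field_simp; try ring
      · intro hh
        have := (key (t*u - 1) (t*p) 0
          (by rw [ht]; field_simp; try linarith)
          (by linear_combination (norm := module) hh)).2.1
        nlinarith
      · intro hh
        have := (key (t*u) (t*p) (-1)
          (by rw [ht]; field_simp; try linarith)
          (by linear_combination (norm := module) hh)).2.2
        norm_num at this
    · -- q = 0 : b₂ ∈ [a, b₁]
      refine ⟨b₂, ⟨Or.inl ⟨u, p, le_of_lt hu0, le_of_lt hv, by linarith, ?_⟩,
        Or.inl (right_mem_segment ℝ a b₂)⟩, hb2a, hb2c⟩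
      rw [hx, hq0]
      module
    · -- u > 0, q > 0 : b₂ interior to triangle a b₁ c
      exfalso
      have := angle_lt_of_interior hli hu0 hv hq0 hsum hx
      rw [h₁, h₂] at this
      exact lt_irrefl α this

/-- Two `α`-bend edges between `a` and `c` whose bend points lie strictly on the same side
of line `ac` must cross; hence a plane `α`-bend multigraph has at most one edge between
`a` and `c` with bend point in a given open halfplane bounded by line `ac`. -/
theorem stmt_0 (α : ℝ) (hα : α ∈ Set.Ioo 0 π)
    (a c : Pt) (hac : a ≠ c) (b₁ b₂ : Pt) (hb : b₁ ≠ b₂)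
    (hb₁ : b₁ ∉ affineSpan ℝ ({a, c} : Set Pt))
    (hb₂ : b₂ ∉ affineSpan ℝ ({a, c} : Set Pt))
    (hside : (affineSpan ℝ ({a, c} : Set Pt)).SSameSide b₁ b₂)
    (h₁ : ∠ a b₁ c = α) (h₂ : ∠ a b₂ c = α) :
    (∃ x : Pt, x ∈ bendImage (a, b₁, c) ∩ bendImage (a, b₂, c) ∧ x ≠ a ∧ x ≠ c) ∧
    (∀ (V : Finset Pt) (E : Finset (Pt × Pt × Pt)), IsPlaneBendMultigraph α V E →
      ∀ e ∈ E, ∀ f ∈ E, edgeEndpoints e = {a, c} → edgeEndpoints f = {a, c} →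
        (affineSpan ℝ ({a, c} : Set Pt)).SSameSide e.2.1 f.2.1 → e = f) := by
  constructor
  · exact cross_exists α a c hac b₁ b₂ hb₁ hb₂ hside h₁ h₂
  · intro V E hmg e he f hf hee hef hss
    by_contra hne
    have hnorm : ∀ g ∈ E, edgeEndpoints g = ({a, c} : Set Pt) →
        ∠ a g.2.1 c = α ∧ bendImage g = bendImage (a, g.2.1, c) := by
      intro g hg hgE
      obtain ⟨⟨hgne, hang⟩, -, -⟩ := hmg.1 g hg
      simp only [edgeEndpoints] at hgE
      rcases Set.pair_eq_pair_iff.mp hgE with ⟨hg1, hg2⟩ | ⟨hg1, hg2⟩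
      · constructor
        · rw [← hg1, ← hg2]; exact hang
        · simp only [bendImage]; rw [hg1, hg2]
      · constructor
        · rw [← hg2, ← hg1, angle_comm]; exact hang
        · simp only [bendImage]
          rw [hg1, hg2, segment_symm, Set.union_comm]
          congr 1
          exact segment_symm ℝ _ _
    obtain ⟨hangE, hbiE⟩ := hnorm e he hee
    obtain ⟨hangF, hbiF⟩ := hnorm f hf hef
    obtain ⟨x, hxm, hxa, hxc⟩ :=
      cross_exists α a c hac e.2.1 f.2.1 hss.2.1 hss.2.2 hss hangE hangF
    have hxm' : x ∈ bendImage e ∩ bendImage f := by rw [hbiE, hbiF]; exact hxm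
    have hsub := hmg.2.2.2 e he f hf hne hxm'
    have hxe : x ∈ edgeEndpoints e := hsub.1
    rw [hee] at hxe
    simp only [Set.mem_insert_iff, Set.mem_singleton_iff] at hxe
    rcases hxe with h | h
    · exact hxa h
    · exact hxc h
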